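/- For the bear process (Z(n))_{n≥0} of the previous context, the cumulative distribution satisfies: P(Z(n) ≥ h) = ∏_{i=1}^{h-1}(1 - i/N) if n ≥ h - 1, and P(Z(n) ≥ h) = 0 if n < h - 1. -/

import Mathlib

open Finset

/-- Swap a double sum over a triangle. -/
lemma bear_sum_swap (h N : ℕ) (f : ℕ → ℝ) :
    ∑ z ∈ Finset.Icc h N, ∑ w ∈ Finset.Icc z N, f w
      = ∑ w ∈ Finset.Icc h N, ((w + 1 - h : ℕ) : ℝ) * f w := by
  have step1 : ∀ z ∈ Finset.Icc h N,
      ∑ w ∈ Finset.Icc z N, f w = ∑ w ∈ Finset.Icc h N, if z ≤ w then f w else 0 := by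
    intro z hz
    simp only [Finset.mem_Icc] at hz
    rw [← Finset.sum_filter]
    congr 1
    ext w
    simp only [Finset.mem_Icc, Finset.mem_filter]
    omega
  rw [Finset.sum_congr rfl step1, Finset.sum_comm]
  refine Finset.sum_congr rfl ?_
  intro w hw
  simp only [Finset.mem_Icc] at hw
  rw [← Finset.sum_filter]
  have hfil : Finset.filter (fun z => z ≤ w) (Finset.Icc h N) = Finset.Icc h w := by
    ext z
    simp only [Finset.mem_Icc, Finset.mem_filter]
    omega
  rw [hfil, Finset.sum_const, Nat.card_Icc, nsmul_eq_mul]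

/-- Shift the index of a sum over an interval. -/
lemma bear_sum_shift (a N : ℕ) (ha : 1 ≤ a) (hN : 1 ≤ N) (g : ℕ → ℝ) :
    ∑ z ∈ Finset.Icc a N, g (z - 1) = ∑ w ∈ Finset.Icc (a - 1) (N - 1), g w := by
  have himg : Finset.Icc a N = (Finset.Icc (a - 1) (N - 1)).image (· + 1) := by
    rw [Finset.image_add_right_Icc]
    congr 1 <;> omega
  rw [himg, Finset.sum_image (by intro x _ y _ hxy; simp only at hxy; omega)]
  simp

/-- The key one-step recurrence for the tail sums of the bear chain. -/
lemma bear_key (N : ℕ) (hN : 1 ≤ N) (p : ℕ → ℕ → ℝ)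
    (hrec : ∀ n : ℕ, ∀ h ∈ Finset.Icc 1 N,
      p (n + 1) h = (1 / (N : ℝ)) * ∑ z ∈ Finset.Icc h N, p n z +
        (if 2 ≤ h then (((N : ℝ) - ((h : ℝ) - 1)) / (N : ℝ)) * p n (h - 1) else 0))
    (n h : ℕ) (hh1 : 1 ≤ h) (hhN : h ≤ N) :
    ∑ z ∈ Finset.Icc h N, p (n + 1) z
      = (((N : ℝ) + 1 - h) / N) * ∑ w ∈ Finset.Icc (max (h - 1) 1) N, p n w := by
  set m := max (h - 1) 1 with hm
  have hNne : (N : ℝ) ≠ 0 := Nat.cast_ne_zero.mpr (by omega)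
  -- rewrite each term with the recurrence
  have step1 : ∑ z ∈ Finset.Icc h N, p (n + 1) z
      = ∑ z ∈ Finset.Icc h N, ((1 / (N : ℝ)) * ∑ w ∈ Finset.Icc z N, p n w +
        (if 2 ≤ z then (((N : ℝ) - ((z : ℝ) - 1)) / (N : ℝ)) * p n (z - 1) else 0)) := by
    refine Finset.sum_congr rfl ?_
    intro z hz
    simp only [Finset.mem_Icc] at hz
    exact hrec n z (Finset.mem_Icc.mpr ⟨by omega, hz.2⟩)
  rw [step1, Finset.sum_add_distrib]
  -- first piece
  have A1 : ∑ z ∈ Finset.Icc h N, (1 / (N : ℝ)) * ∑ w ∈ Finset.Icc z N, p n w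
      = (1 / (N : ℝ)) * ∑ w ∈ Finset.Icc h N, ((w + 1 - h : ℕ) : ℝ) * p n w := by
    rw [← Finset.mul_sum, bear_sum_swap]
  -- second piece: drop the `if`, restricting to `Icc (max h 2) N`
  have B1 : ∑ z ∈ Finset.Icc h N,
        (if 2 ≤ z then (((N : ℝ) - ((z : ℝ) - 1)) / (N : ℝ)) * p n (z - 1) else 0)
      = ∑ z ∈ Finset.Icc (max h 2) N,
        (((N : ℝ) - ((z : ℝ) - 1)) / (N : ℝ)) * p n (z - 1) := by
    rw [← Finset.sum_subset (Finset.Icc_subset_Icc (le_max_left h 2) le_rfl)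
      (by intro x hx hx'; simp only [Finset.mem_Icc] at hx hx'
          rw [if_neg (by omega)])]
    refine Finset.sum_congr rfl ?_
    intro z hz
    simp only [Finset.mem_Icc] at hz
    rw [if_pos (by omega)]
  -- rewrite the cast and shift
  have B2 : ∑ z ∈ Finset.Icc (max h 2) N,
        (((N : ℝ) - ((z : ℝ) - 1)) / (N : ℝ)) * p n (z - 1)
      = ∑ w ∈ Finset.Icc m (N - 1), (((N : ℝ) - (w : ℝ)) / (N : ℝ)) * p n w := by
    have : ∀ z ∈ Finset.Icc (max h 2) N,
        (((N : ℝ) - ((z : ℝ) - 1)) / (N : ℝ)) * p n (z - 1)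
          = (((N : ℝ) - ((z - 1 : ℕ) : ℝ)) / (N : ℝ)) * p n (z - 1) := by
      intro z hz
      simp only [Finset.mem_Icc] at hz
      have : ((z - 1 : ℕ) : ℝ) = (z : ℝ) - 1 := by
        push_cast [Nat.cast_sub (by omega : 1 ≤ z)]; ring
      rw [this]
    rw [Finset.sum_congr rfl this,
      bear_sum_shift (max h 2) N (by omega) hN (fun w => (((N : ℝ) - (w : ℝ)) / (N : ℝ)) * p n w)]
    congr 1
    congr 1
    omega
  rw [A1, B1, B2]
  -- express both sums over `Icc m N` with `if` coefficients
  have hmN : m ≤ N := by omega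
  have hmh : m ≤ h := by omega
  have A2 : ∑ w ∈ Finset.Icc h N, ((w + 1 - h : ℕ) : ℝ) * p n w
      = ∑ w ∈ Finset.Icc m N, (if h ≤ w then ((w : ℝ) + 1 - h) else 0) * p n w := by
    rw [← Finset.sum_subset (Finset.Icc_subset_Icc hmh le_rfl)
      (by intro x hx hx'; simp only [Finset.mem_Icc] at hx hx'
          rw [if_neg (by omega), zero_mul])]
    refine Finset.sum_congr rfl ?_
    intro w hw
    simp only [Finset.mem_Icc] at hw
    rw [if_pos hw.1]
    congr 1
    push_cast [Nat.cast_sub (by omega : h ≤ w + 1)]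
    ring
  have B3 : ∑ w ∈ Finset.Icc m (N - 1), (((N : ℝ) - (w : ℝ)) / (N : ℝ)) * p n w
      = (1 / (N : ℝ)) * ∑ w ∈ Finset.Icc m N, (if w ≤ N - 1 then ((N : ℝ) - w) else 0) * p n w := by
    rw [Finset.mul_sum,
      ← Finset.sum_subset (Finset.Icc_subset_Icc le_rfl (by omega : N - 1 ≤ N))
      (by intro x hx hx'; simp only [Finset.mem_Icc] at hx hx'
          rw [if_neg (by omega), zero_mul, mul_zero])]
    refine Finset.sum_congr rfl ?_
    intro w hw
    simp only [Finset.mem_Icc] at hw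
    rw [if_pos hw.2]
    ring
  rw [A2, B3, ← mul_add, ← Finset.sum_add_distrib]
  have hpt : ∀ w ∈ Finset.Icc m N,
      (if h ≤ w then ((w : ℝ) + 1 - h) else 0) * p n w
        + (if w ≤ N - 1 then ((N : ℝ) - w) else 0) * p n w
      = ((N : ℝ) + 1 - h) * p n w := by
    intro w hw
    simp only [Finset.mem_Icc] at hw
    rw [← add_mul]
    congr 1
    split_ifs with h1 h2 h2
    · ring
    · have hwN : w = N := by omega
      subst hwN; ring
    · have hw1 : (w : ℝ) + 1 = (h : ℝ) := by
        have : w + 1 = h := by omega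
        exact_mod_cast congrArg (Nat.cast : ℕ → ℝ) this
      linarith
    · exfalso; omega
  rw [Finset.sum_congr rfl hpt, ← Finset.mul_sum]
  ring

/-- Cumulative distribution of the 'bear on a stair' chain:
`P(Z(n) ≥ h) = ∏_{i=1}^{h-1} (1 - i/N)` for `n ≥ h - 1`, and `0` otherwise. -/
theorem stmt9 (N : ℕ) (hN : 1 ≤ N) (p : ℕ → ℕ → ℝ)
    (h0 : ∀ h, p 0 h = if h = 1 then 1 else 0)
    (hrec : ∀ n : ℕ, ∀ h ∈ Finset.Icc 1 N,
      p (n + 1) h = (1 / (N : ℝ)) * ∑ z ∈ Finset.Icc h N, p n z +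
        (if 2 ≤ h then (((N : ℝ) - ((h : ℝ) - 1)) / (N : ℝ)) * p n (h - 1) else 0))
    (n h : ℕ) (hh1 : 1 ≤ h) (hhN : h ≤ N) :
    (h - 1 ≤ n → ∑ z ∈ Finset.Icc h N, p n z = ∏ i ∈ Finset.Icc 1 (h - 1), (1 - (i : ℝ) / (N : ℝ))) ∧
    (n < h - 1 → ∑ z ∈ Finset.Icc h N, p n z = 0) := by
  have hNne : (N : ℝ) ≠ 0 := Nat.cast_ne_zero.mpr (by omega)
  have main : ∀ n : ℕ, ∀ h : ℕ, 1 ≤ h → h ≤ N →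
      ∑ z ∈ Finset.Icc h N, p n z
        = if h - 1 ≤ n then ∏ i ∈ Finset.Icc 1 (h - 1), (1 - (i : ℝ) / (N : ℝ)) else 0 := by
    intro n
    induction n with
    | zero =>
      intro h hh1 hhN
      by_cases hc : h = 1
      · subst hc
        rw [if_pos (by omega)]
        simp only [h0]
        rw [Finset.sum_ite_eq' (Finset.Icc 1 N) 1 (fun _ => (1 : ℝ)),
          if_pos (Finset.mem_Icc.mpr ⟨le_rfl, hN⟩)]
        have : (1 : ℕ) - 1 = 0 := rfl
        rw [this]
        simp
      · rw [if_neg (by omega)]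
        refine Finset.sum_eq_zero ?_
        intro z hz
        simp only [Finset.mem_Icc] at hz
        rw [h0, if_neg (by omega)]
    | succ n ih =>
      intro h hh1 hhN
      rw [bear_key N hN p hrec n h hh1 hhN]
      by_cases hc : h = 1
      · subst hc
        have : max (1 - 1) 1 = 1 := rfl
        rw [this, ih 1 le_rfl hN, if_pos (by omega), if_pos (by omega)]
        have h10 : (1 : ℕ) - 1 = 0 := rfl
        rw [h10]
        simp only [Finset.Icc_eq_empty_of_lt (by omega : (0:ℕ) < 1), Finset.prod_empty, mul_one]
        push_cast
        field_simp
        ring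
      · -- h ≥ 2
        have hh2 : 2 ≤ h := by omega
        have hmax : max (h - 1) 1 = h - 1 := by omega
        rw [hmax, ih (h - 1) (by omega) (by omega)]
        by_cases hc2 : h - 1 ≤ n + 1
        · rw [if_pos (by omega), if_pos hc2]
          have hprod : ∏ i ∈ Finset.Icc 1 (h - 1), (1 - (i : ℝ) / (N : ℝ))
              = (∏ i ∈ Finset.Icc 1 (h - 1 - 1), (1 - (i : ℝ) / (N : ℝ)))
                * (1 - ((h - 1 : ℕ) : ℝ) / (N : ℝ)) := by
            have hb : h - 1 = (h - 1 - 1) + 1 := by omega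
            rw [hb, Finset.prod_Icc_succ_top (by omega), ← hb]
          rw [hprod]
          have hcast : ((h - 1 : ℕ) : ℝ) = (h : ℝ) - 1 := by
            push_cast [Nat.cast_sub (by omega : 1 ≤ h)]; ring
          rw [hcast]
          have : (1 : ℝ) - ((h : ℝ) - 1) / (N : ℝ) = ((N : ℝ) + 1 - h) / N := by
            field_simp; ring
          rw [this]
          ring
        · rw [if_neg (by omega), if_neg (by omega), mul_zero]
  refine ⟨fun hle => ?_, fun hlt => ?_⟩
  · rw [main n h hh1 hhN, if_pos hle]
  · rw [main n h hh1 hhN, if_neg (by omega)]
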